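/- arXiv:1903.03900 — 2 statements merged into one kernel-verified Lean document; each statement's English description precedes it below -/
import Mathlib

section
/- Let (R, m, k) be a commutative Noetherian local ring and I an ideal of R. If the quotient map R → R/I is a large homomorphism, then I ∩ m² = mI (equivalently, the induced map Tor₁^R(R/I, k) → Tor₁^R(k, k) is injective, i.e. a minimal generating set of I can be completed to a minimal generating set of m). -/
/-!
STATEMENT 0: If `(R, 𝔪, k)` is a commutative Noetherian local ring, `I` an ideal of `R`,
and the quotient map `R → R/I` is a large homomorphism, then `I ∩ 𝔪² = 𝔪 I`.

A surjective local homomorphism `f : R → S` is *large* if the induced map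
`Tor_*^R(k,k) → Tor_*^S(k,k)` is surjective; equivalently (Levin, Theorem 1.1), the map
`Tor_*^R(S,k) → Tor_*^R(k,k)` induced by the augmentation `S → k = S/𝔪S` is injective.
We use the latter (equivalent) form as the definition, since it takes place entirely
over the ring `R`.
-/

open CategoryTheory IsLocalRing

universe u

/-- The residue `M/𝔪M` of an `R`-module `M` over a local ring `R`, as an object of
`ModuleCat R`.  For `M = R/I` with `I ≤ 𝔪` this is canonically the residue field `k`,
and for `M = R` it is `k` itself. -/
noncomputable def residueModule (R : Type u) [CommRing R] [IsLocalRing R]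
    (M : Type u) [AddCommGroup M] [Module R M] : ModuleCat.{u} R :=
  ModuleCat.of R (M ⧸ (maximalIdeal R • ⊤ : Submodule R M))

/-- The map `Tor_i^R(S, k) → Tor_i^R(S/𝔪S, k)` induced (in the first variable of `Tor`)
by the augmentation `S → S/𝔪S`.  When `S = R/I` is a local quotient ring of `R`, the target
is canonically `Tor_i^R(k,k)` and this is the map `φ_*` of Levin's Definition/Theorem 1.1. -/
noncomputable def torAugmentationMap (R : Type u) [CommRing R] [IsLocalRing R]
    (S : Type u) [AddCommGroup S] [Module R S] (i : ℕ) :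
    (((Tor (ModuleCat.{u} R) i).obj (ModuleCat.of R S)).obj
        (ModuleCat.of R (ResidueField R))) ⟶
      (((Tor (ModuleCat.{u} R) i).obj (residueModule R S)).obj
        (ModuleCat.of R (ResidueField R))) :=
  ((Tor (ModuleCat.{u} R) i).map
      (ModuleCat.ofHom (Submodule.mkQ (maximalIdeal R • ⊤ : Submodule R S)))).app
    (ModuleCat.of R (ResidueField R))

/-- The quotient map `R → R/I` is a *large* homomorphism of local rings:
the induced map `Tor_i^R(R/I, k) → Tor_i^R(k, k)` is injective for all `i ≥ 0`
(Levin's Definition/Theorem 1.1(2)). -/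
noncomputable def IsLargeQuotient (R : Type u) [CommRing R] [IsLocalRing R]
    (I : Ideal R) : Prop :=
  ∀ i : ℕ, Function.Injective (torAugmentationMap R (R ⧸ I) i)

open MonoidalCategory

section helpers
variable {R : Type u} [CommRing R]

lemma homologyMap_injective_elem {S T : ShortComplex (ModuleCat.{u} R)} (φ : S ⟶ T)
    (hinj : Function.Injective (ShortComplex.homologyMap φ))
    (z : S.X₂) (hz : S.g z = 0) (h0 : φ.τ₂ z = 0) : ∃ w : S.X₁, S.f w = z := by
  set zk : LinearMap.ker S.g.hom := ⟨z, hz⟩ with hzk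
  set zc : S.cycles := S.moduleCatCyclesIso.inv zk with hzc
  have hic : S.iCycles zc = z := S.moduleCatCyclesIso_inv_iCycles_apply zk
  have h1 : ShortComplex.cyclesMap φ zc = 0 := by
    have hmono : Function.Injective T.iCycles :=
      (ModuleCat.mono_iff_injective T.iCycles).mp inferInstance
    apply hmono
    rw [map_zero]
    have h3 : T.iCycles (ShortComplex.cyclesMap φ zc) = φ.τ₂ (S.iCycles zc) :=
      congrArg (fun (f : S.cycles ⟶ T.X₂) => f zc) (ShortComplex.cyclesMap_i φ)
    rw [h3, hic, h0]
  have h2 : S.homologyπ zc = 0 := by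
    apply hinj
    rw [map_zero]
    have h3 : ShortComplex.homologyMap φ (S.homologyπ zc)
        = T.homologyπ (ShortComplex.cyclesMap φ zc) :=
      congrArg (fun (f : S.cycles ⟶ T.homology) => f zc) (ShortComplex.homologyπ_naturality φ)
    rw [h3, h1, map_zero]
  have h4 : S.moduleCatLeftHomologyData.π zk = 0 := by
    have hinv : Function.Injective S.moduleCatHomologyIso.inv :=
      (ModuleCat.mono_iff_injective _).mp inferInstance
    apply hinv
    rw [map_zero]
    have h5 : S.homologyπ (S.moduleCatCyclesIso.inv zk)
        = S.moduleCatHomologyIso.inv (S.moduleCatLeftHomologyData.π zk) :=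
      congrArg (fun (f : S.moduleCatLeftHomologyData.K ⟶ S.homology) => f zk)
        S.moduleCatCyclesIso_inv_π
    rw [← h5, ← hzc, h2]
  obtain ⟨w, hw⟩ := (Submodule.Quotient.mk_eq_zero _).mp h4
  exact ⟨w, congrArg Subtype.val hw⟩

lemma injective_of_comp_iso {A B A' B' : ModuleCat.{u} R} (g₁ : A' ⟶ A) (g₂ : B ⟶ B')
    [IsIso g₁] [IsIso g₂] (h : A ⟶ B) {big : A' ⟶ B'} (hcomp : big = g₁ ≫ h ≫ g₂)
    (hinj : Function.Injective big) : Function.Injective h := by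
  intro a b hab
  obtain ⟨a', rfl⟩ := (ModuleCat.epi_iff_surjective g₁).mp inferInstance a
  obtain ⟨b', rfl⟩ := (ModuleCat.epi_iff_surjective g₁).mp inferInstance b
  have h2 : big a' = big b' := by
    rw [hcomp]
    show g₂ (h (g₁ a')) = g₂ (h (g₁ b'))
    rw [hab]
  rw [hinj h2]

end helpers

theorem large_implies_inf_sq_eq_smul
    (R : Type u) [CommRing R] [IsNoetherianRing R] [IsLocalRing R]
    (I : Ideal R) (hI : I ≤ maximalIdeal R)
    (hlarge : IsLargeQuotient R I) :
    I ⊓ maximalIdeal R ^ 2 = maximalIdeal R * I := by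
  refine le_antisymm ?_ (le_inf Ideal.mul_le_right ?_)
  swap
  · rw [pow_two]; exact Ideal.mul_mono le_rfl hI
  intro x hx
  obtain ⟨hxI, hxm2⟩ := hx
  classical
  set C := ModuleCat.{u} R
  set kk : ModuleCat.{u} R := ModuleCat.of R (ResidueField R) with hkk
  set SS : ModuleCat.{u} R := ModuleCat.of R (R ⧸ I) with hSS
  set SS' : ModuleCat.{u} R := residueModule R (R ⧸ I) with hSS'
  set f : SS ⟶ SS' :=
    ModuleCat.ofHom (Submodule.mkQ (maximalIdeal R • ⊤ : Submodule R (R ⧸ I)) :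
      (R ⧸ I) →ₗ[R] _) with hf
  obtain ⟨P⟩ := (HasProjectiveResolution.out (Z := kk))
  set F : C ⥤ C := (tensoringLeft C).obj SS with hF
  set G : C ⥤ C := (tensoringLeft C).obj SS' with hG
  set α : F ⟶ G := (tensoringLeft C).map f with hα
  set K : HomologicalComplex C (ComplexShape.down ℕ) :=
    (F.mapHomologicalComplex _).obj P.complex with hK
  set K' : HomologicalComplex C (ComplexShape.down ℕ) :=
    (G.mapHomologicalComplex _).obj P.complex with hK'
  set ψ : K ⟶ K' := (NatTrans.mapHomologicalComplex α _).app P.complex with hψ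
  -- step 1: injectivity of the homology map on the tensored complexes
  have htor : torAugmentationMap R (R ⧸ I) 1
      = (NatTrans.leftDerived α 1).app kk := rfl
  have hEq := ProjectiveResolution.leftDerived_app_eq (F := F) (G := G) α P 1
  have hinjH : Function.Injective
      ((HomologicalComplex.homologyFunctor C (ComplexShape.down ℕ) 1).map ψ) := by
    refine injective_of_comp_iso (P.isoLeftDerivedObj F 1).hom (P.isoLeftDerivedObj G 1).inv
      _ ?_ (htor ▸ hlarge 1)
    exact hEq
  -- step 2: transfer to the explicit short complexes via `shortComplexFunctor'`
  have hprev : (ComplexShape.down ℕ).prev 1 = 2 := by simp [ChainComplex.prev]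
  have hnext : (ComplexShape.down ℕ).next 1 = 0 := ChainComplex.next_nat_succ 0
  set η := HomologicalComplex.homologyFunctorIso' C (ComplexShape.down ℕ) 2 1 0 hprev hnext
    with hη
  set φ : K.sc' 2 1 0 ⟶ K'.sc' 2 1 0 :=
    (HomologicalComplex.shortComplexFunctor' C (ComplexShape.down ℕ) 2 1 0).map ψ with hφ
  have hinj : Function.Injective (ShortComplex.homologyMap φ) := by
    refine injective_of_comp_iso (η.app K).hom (η.app K').inv _ ?_ hinjH
    have hnat := η.hom.naturality ψ
    exact (Iso.eq_comp_inv (η.app K')).mpr hnat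
  -- step 3: the augmentation and exactness facts
  have hπsurj : Function.Surjective (P.π.f 0) :=
    (ModuleCat.epi_iff_surjective _).mp inferInstance
  obtain ⟨e₀, he₀⟩ := hπsurj (1 : ResidueField R)
  have hexact0 : ∀ v : P.complex.X 0, P.π.f 0 v = 0 →
      ∃ p : P.complex.X 1, P.complex.d 1 0 p = v :=
    fun v hv => (ShortComplex.moduleCat_exact_iff _).mp P.exact₀ v hv
  -- step 4: produce the cycle
  have hclaim : ∀ y ∈ maximalIdeal R * maximalIdeal R,
      ∃ q : P.complex.X 1, P.complex.d 1 0 q = y • e₀ ∧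
        q ∈ (maximalIdeal R • ⊤ : Submodule R (P.complex.X 1)) := by
    intro y hy
    refine Submodule.mul_induction_on hy ?_ ?_
    · intro a ha b hb
      have hb0 : P.π.f 0 (b • e₀) = 0 := by
        rw [map_smul, he₀]
        show b • (1 : ResidueField R) = 0
        have h1 : (1 : ResidueField R) = Submodule.Quotient.mk (1 : R) := rfl
        rw [Algebra.smul_def, mul_one, IsLocalRing.ResidueField.algebraMap_eq,
          IsLocalRing.residue_eq_zero_iff]
        exact hb
      obtain ⟨p, hp⟩ := hexact0 _ hb0
      exact ⟨a • p, by rw [map_smul, hp, smul_smul],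
        Submodule.smul_mem_smul ha Submodule.mem_top⟩
    · rintro y₁ y₂ ⟨q₁, hq₁, hm₁⟩ ⟨q₂, hq₂, hm₂⟩
      exact ⟨q₁ + q₂, by rw [map_add, hq₁, hq₂, add_smul], Submodule.add_mem _ hm₁ hm₂⟩
  obtain ⟨q, hq, hqm⟩ := hclaim x (by rwa [pow_two] at hxm2)
  have hone : ∀ c : R, c • (1 : R ⧸ I) = Submodule.Quotient.mk c := by
    intro c
    have h1 : (1 : R ⧸ I) = Submodule.Quotient.mk (1 : R) := rfl
    rw [h1, ← Submodule.Quotient.mk_smul, smul_eq_mul, mul_one]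
  have hzg : (K.sc' 2 1 0).g ((1 : R ⧸ I) ⊗ₜ[R] q) = 0 := by
    show (SS ◁ P.complex.d 1 0) ((1 : R ⧸ I) ⊗ₜ[R] q) = 0
    rw [ModuleCat.MonoidalCategory.whiskerLeft_apply, hq, ← TensorProduct.smul_tmul,
      hone, (Submodule.Quotient.mk_eq_zero _).mpr hxI, TensorProduct.zero_tmul]
  have hφz : φ.τ₂ ((1 : R ⧸ I) ⊗ₜ[R] q) = 0 := by
    show (f ▷ P.complex.X 1) ((1 : R ⧸ I) ⊗ₜ[R] q) = 0
    rw [ModuleCat.MonoidalCategory.whiskerRight_apply]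
    refine Submodule.smul_induction_on hqm ?_ ?_
    · intro c hc p _
      rw [← TensorProduct.smul_tmul, ← map_smul, hone]
      have hfc : f (Submodule.Quotient.mk c) = 0 := by
        show Submodule.Quotient.mk (Submodule.Quotient.mk c : R ⧸ I) = (0 : _)
        rw [Submodule.Quotient.mk_eq_zero]
        have h2 : (Submodule.Quotient.mk c : R ⧸ I) = c • (1 : R ⧸ I) := (hone c).symm
        rw [h2]
        exact Submodule.smul_mem_smul (by exact hc) Submodule.mem_top
      rw [hfc, TensorProduct.zero_tmul]
    · intro y₁ y₂ h₁ h₂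
      rw [TensorProduct.tmul_add, h₁, h₂, add_zero]
  obtain ⟨w, hw⟩ := homologyMap_injective_elem φ hinj ((1 : R ⧸ I) ⊗ₜ[R] q) hzg hφz
  -- step 5: rewrite w as a pure tensor and compare in `P₁ ⧸ I•⊤`
  set e₂ := TensorProduct.quotTensorEquivQuotSMul (P.complex.X 2) I with he₂
  obtain ⟨w', hw'⟩ := Submodule.Quotient.mk_surjective _ (e₂ w)
  have hw2 : w = (1 : R ⧸ I) ⊗ₜ[R] w' := by
    have h2 : e₂.symm (Submodule.Quotient.mk w') = w :=
      (congrArg e₂.symm hw').trans (e₂.symm_apply_apply w)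
    rw [← h2, TensorProduct.quotTensorEquivQuotSMul_symm_mk]
  have hz2 : (1 : R ⧸ I) ⊗ₜ[R] q = (1 : R ⧸ I) ⊗ₜ[R] (P.complex.d 2 1 w') := by
    rw [← hw, hw2]
    show (SS ◁ P.complex.d 2 1) ((1 : R ⧸ I) ⊗ₜ[R] w') = _
    rw [ModuleCat.MonoidalCategory.whiskerLeft_apply]
  set e₁ := TensorProduct.quotTensorEquivQuotSMul (P.complex.X 1) I with he₁
  have hmkq : (Submodule.Quotient.mk q :
      P.complex.X 1 ⧸ (I • ⊤ : Submodule R (P.complex.X 1)))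
      = Submodule.Quotient.mk (P.complex.d 2 1 w') := by
    have h3 := congrArg e₁ hz2
    rwa [show (1 : R ⧸ I) = Ideal.Quotient.mk I 1 from rfl,
      TensorProduct.quotTensorEquivQuotSMul_mk_tmul,
      TensorProduct.quotTensorEquivQuotSMul_mk_tmul, one_smul, one_smul] at h3
  have hsub : q - P.complex.d 2 1 w' ∈ (I • ⊤ : Submodule R (P.complex.X 1)) :=
    (Submodule.Quotient.eq _).mp hmkq
  -- step 6: x • e₀ lies in I • ker π₀
  have hd10π : ∀ p : P.complex.X 1, P.π.f 0 (P.complex.d 1 0 p) = 0 := by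
    intro p
    show (P.complex.d 1 0 ≫ P.π.f 0) p = 0
    rw [P.complex_d_comp_π_f_zero]
    rfl
  have hd0 : P.complex.d 1 0 (P.complex.d 2 1 w') = 0 := by
    show (P.complex.d 2 1 ≫ P.complex.d 1 0) w' = 0
    rw [P.complex.d_comp_d]
    rfl
  have hxe : x • e₀ = P.complex.d 1 0 (q - P.complex.d 2 1 w') := by
    rw [map_sub, hq, hd0, sub_zero]
  have hmem : x • e₀ ∈ I • (LinearMap.ker (P.π.f 0).hom) := by
    rw [hxe]
    have h5 : P.complex.d 1 0 (q - P.complex.d 2 1 w') ∈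
        Submodule.map (P.complex.d 1 0).hom (I • ⊤) := Submodule.mem_map_of_mem hsub
    rw [Submodule.map_smul''] at h5
    refine Submodule.smul_mono le_rfl ?_ h5
    rw [Submodule.map_top]
    rintro v ⟨p, rfl⟩
    exact hd10π p
  -- step 7: project back to R using projectivity of P₀
  set resid : ModuleCat.of R R ⟶ kk :=
    ModuleCat.ofHom (Submodule.mkQ (maximalIdeal R) : R →ₗ[R] _) with hresid
  have hepi : Epi resid := (ModuleCat.epi_iff_surjective _).mpr (Submodule.mkQ_surjective _)
  set σ : P.complex.X 0 ⟶ ModuleCat.of R R :=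
    Projective.factorThru (show P.complex.X 0 ⟶ kk from P.π.f 0) resid with hσdef
  have hσ : σ ≫ resid = P.π.f 0 := Projective.factorThru_comp _ _
  set u : R := σ e₀ with hu
  have hu1 : (Submodule.Quotient.mk u : ResidueField R) = 1 := by
    have h6 : resid (σ e₀) = P.π.f 0 e₀ :=
      congrArg (fun (g : P.complex.X 0 ⟶ kk) => g e₀) hσ
    rw [he₀] at h6
    exact h6
  have hunit : IsUnit u := by
    by_contra h
    have hmem' : u ∈ maximalIdeal R :=
      (IsLocalRing.mem_maximalIdeal _).mpr (mem_nonunits_iff.mpr h)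
    have h7 : (1 : ResidueField R) = 0 := by
      exact hu1.symm.trans ((Submodule.Quotient.mk_eq_zero _).mpr hmem')
    exact one_ne_zero h7
  have hxu : x * u ∈ maximalIdeal R * I := by
    have h7 : σ (x • e₀) ∈ Submodule.map σ.hom (I • LinearMap.ker (P.π.f 0).hom) :=
      Submodule.mem_map_of_mem hmem
    rw [Submodule.map_smul''] at h7
    have h8 : Submodule.map σ.hom (LinearMap.ker (P.π.f 0).hom) ≤
        (maximalIdeal R : Submodule R R) := by
      rintro v ⟨p, hp, rfl⟩
      have h9 : resid (σ p) = P.π.f 0 p :=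
        congrArg (fun (g : P.complex.X 0 ⟶ kk) => g p) hσ
      have h10 : resid (σ p) = 0 := by rw [h9]; exact hp
      exact (Submodule.Quotient.mk_eq_zero _).mp h10
    have h10 : σ (x • e₀) ∈ I • (maximalIdeal R : Submodule R R) :=
      Submodule.smul_mono le_rfl h8 h7
    have h11 : σ (x • e₀) = x * u := by
      rw [map_smul]
      rfl
    rw [h11, Ideal.smul_eq_mul] at h10
    rw [mul_comm]
    exact h10
  obtain ⟨v, hv⟩ := hunit.exists_right_inv
  have hfin : x = x * u * v := by rw [mul_assoc, hv, mul_one]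
  rw [hfin]
  exact Ideal.mul_mem_right v _ hxu
end

section
/- Let (R, m, k) be a commutative Noetherian local ring and let I, J be ideals of R such that m = I ⊕ J (that is, m = I + J and I ∩ J = 0). Then for every i ≥ 0 the map Tor_i^R(R/I, k) → Tor_i^R(k, k) induced by the surjection R/I → k is injective; in particular the quotient map R → R/I is a large homomorphism. -/
/-!
STATEMENT 3: Let `(R, 𝔪, k)` be a commutative Noetherian local ring and `I, J` ideals
with `𝔪 = I ⊕ J` (i.e. `I + J = 𝔪` and `I ∩ J = 0`).  Then for every `i ≥ 0` the map
`Tor_i^R(R/I, k) → Tor_i^R(k, k)` induced by the surjection `R/I → k` is injective;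
in particular `R → R/I` is a large homomorphism.

Here the augmentation `R/I → k` is realized as `R/I → (R/I)/𝔪(R/I)`, whose target is
canonically `k` (as `I ≤ 𝔪`).
-/

open CategoryTheory IsLocalRing

universe u

/-! ### Auxiliary constructions for the proof -/

namespace LargeAux

open MonoidalCategory HomologicalComplex

set_option linter.unusedSectionVars false

variable {R : Type u} [CommRing R] [IsLocalRing R]
variable (I J : Ideal R)

/-- The natural map `J → R/I`. -/
noncomputable def f0 : ↥J →ₗ[R] (R ⧸ I) := (I.mkQ).comp J.subtype

lemma f0_inj (hint : I ⊓ J = ⊥) : Function.Injective (f0 I J) := by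
  rw [← LinearMap.ker_eq_bot]
  ext x
  simp only [LinearMap.mem_ker, Submodule.mem_bot, f0, LinearMap.comp_apply,
    Submodule.mkQ_apply, Submodule.Quotient.mk_eq_zero, Submodule.coe_subtype]
  constructor
  · intro hx
    have : (x : R) ∈ I ⊓ J := ⟨hx, x.2⟩
    rw [hint] at this
    exact Subtype.ext (by simpa using this)
  · rintro rfl; simp

lemma f0_range (hsum : I ⊔ J = maximalIdeal R) : LinearMap.range (f0 I J) =
    (maximalIdeal R • ⊤ : Submodule R (R ⧸ I)) := by
  have h1 : (maximalIdeal R • ⊤ : Submodule R (R ⧸ I)) =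
      Submodule.map I.mkQ (maximalIdeal R • ⊤ : Submodule R R) := by
    rw [Submodule.map_smul'', Submodule.map_top, Submodule.range_mkQ]
  have h2 : (maximalIdeal R • ⊤ : Submodule R R) = (maximalIdeal R : Submodule R R) := by
    apply le_antisymm
    · rw [Submodule.smul_le]
      intro r hr x _
      simpa [smul_eq_mul] using Ideal.mul_mem_right x _ hr
    · intro x hx
      simpa [smul_eq_mul] using Submodule.smul_mem_smul hx (Submodule.mem_top (x := (1:R)))
  have h3 : Submodule.map I.mkQ (I : Submodule R R) = ⊥ := by
    rw [eq_bot_iff, Submodule.map_le_iff_le_comap]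
    intro x hx
    simp [Submodule.Quotient.mk_eq_zero, hx]
  rw [h1, h2, ← hsum, Submodule.map_sup, h3, bot_sup_eq]
  unfold f0
  rw [LinearMap.range_comp, Submodule.range_subtype]

variable (hsum : I ⊔ J = maximalIdeal R) (hint : I ⊓ J = ⊥)

/-- `J ≃ 𝔪(R/I)`. -/
noncomputable def eJN : ↥J ≃ₗ[R] ↥(maximalIdeal R • ⊤ : Submodule R (R ⧸ I)) :=
  (LinearEquiv.ofInjective (f0 I J) (f0_inj I J hint)).trans
    (LinearEquiv.ofEq _ _ (f0_range I J hsum))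

/-- The section `𝔪(R/I) → R` with values in `J`. -/
noncomputable def sigma : ↥(maximalIdeal R • ⊤ : Submodule R (R ⧸ I)) →ₗ[R] R :=
  J.subtype.comp (eJN I J hsum hint).symm.toLinearMap

lemma sigma_mem (x) : sigma I J hsum hint x ∈ J :=
  ((eJN I J hsum hint).symm x).2

lemma sigma_spec (x) : I.mkQ (sigma I J hsum hint x) = (x : R ⧸ I) := by
  have h := congrArg (Subtype.val) ((eJN I J hsum hint).apply_symm_apply x)
  have h2 : ∀ y : ↥J, ((eJN I J hsum hint) y : R ⧸ I) = f0 I J y := fun y => rfl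
  rw [h2] at h
  exact h

/-- the chain map between tensored complexes induced by a morphism of modules -/
noncomputable def TT (P : ProjectiveResolution (ModuleCat.of R (ResidueField R)))
    {M₁ M₂ : ModuleCat.{u} R} (f : M₁ ⟶ M₂) :
    (((tensoringLeft (ModuleCat.{u} R)).obj M₁).mapHomologicalComplex
        (ComplexShape.down ℕ)).obj P.complex ⟶
      (((tensoringLeft (ModuleCat.{u} R)).obj M₂).mapHomologicalComplex
        (ComplexShape.down ℕ)).obj P.complex :=
  (NatTrans.mapHomologicalComplex ((tensoringLeft (ModuleCat.{u} R)).map f)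
    (ComplexShape.down ℕ)).app P.complex

lemma TT_comp (P : ProjectiveResolution (ModuleCat.of R (ResidueField R)))
    {M₁ M₂ M₃ : ModuleCat.{u} R} (f : M₁ ⟶ M₂) (g : M₂ ⟶ M₃) :
    TT P (f ≫ g) = TT P f ≫ TT P g := by
  rw [TT, Functor.map_comp, NatTrans.mapHomologicalComplex_comp]
  rfl

lemma TT_f (P : ProjectiveResolution (ModuleCat.of R (ResidueField R)))
    {M₁ M₂ : ModuleCat.{u} R} (f : M₁ ⟶ M₂) (n : ℕ) :
    (TT P f).f n = ModuleCat.ofHom (LinearMap.rTensor (P.complex.X n) f.hom) := rfl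

/-- The left unitor iso of complexes `R ⊗ P ≅ P`. -/
noncomputable def thetaIso (P : ProjectiveResolution (ModuleCat.of R (ResidueField R))) :
    (((tensoringLeft (ModuleCat.{u} R)).obj (ModuleCat.of R R)).mapHomologicalComplex
        (ComplexShape.down ℕ)).obj P.complex ≅ P.complex :=
  HomologicalComplex.Hom.isoOfComponents (fun n => λ_ (P.complex.X n))
    (by intro i j _; exact (leftUnitor_naturality (P.complex.d i j)).symm)

end LargeAux

namespace LargeAux

variable {R : Type u} [CommRing R] [IsLocalRing R]

lemma smul_residue_eq_zero {m : R} (hm : m ∈ maximalIdeal R) (y : ResidueField R) :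
    m • y = 0 := by
  rw [Algebra.smul_def]
  have h : algebraMap R (ResidueField R) m = 0 := (IsLocalRing.residue_eq_zero_iff m).mpr hm
  rw [h, zero_mul]

open MonoidalCategory HomologicalComplex in
lemma main_mono (I J : Ideal R)
    (hsum : I ⊔ J = maximalIdeal R) (hint : I ⊓ J = ⊥)
    (P : ProjectiveResolution (ModuleCat.of R (ResidueField R))) (i : ℕ) :
    Mono (homologyMap (TT P (show ModuleCat.of R (R ⧸ I) ⟶ residueModule R (R ⧸ I) from
      ModuleCat.ofHom (Submodule.mkQ (maximalIdeal R • ⊤ : Submodule R (R ⧸ I))))) i) := by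
  set N : Submodule R (R ⧸ I) := maximalIdeal R • ⊤ with hN
  let NM : ModuleCat.{u} R := ModuleCat.of R ↥N
  let SM : ModuleCat.{u} R := ModuleCat.of R (R ⧸ I)
  let φM : SM ⟶ residueModule R (R ⧸ I) := ModuleCat.ofHom N.mkQ
  let ιM : NM ⟶ SM := ModuleCat.ofHom N.subtype
  let σM : NM ⟶ ModuleCat.of R R := ModuleCat.ofHom (sigma I J hsum hint)
  let qM : ModuleCat.of R R ⟶ SM := ModuleCat.ofHom I.mkQ
  haveI flat : ∀ n : ℕ, Module.Flat R (P.complex.X n) := fun n => by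
    haveI : Projective (ModuleCat.of R ↥(P.complex.X n)) :=
      (inferInstance : Projective (P.complex.X n))
    haveI : Module.Projective R (P.complex.X n) := (IsProjective.iff_projective _).mpr this
    infer_instance
  have hιφ : ιM ≫ φM = 0 := by
    apply ModuleCat.hom_ext
    apply LinearMap.ext
    intro x
    exact (Submodule.Quotient.mk_eq_zero N).mpr x.2
  have hzero : TT P ιM ≫ TT P φM = 0 := by
    rw [← TT_comp, hιφ]
    ext n : 1
    apply ModuleCat.hom_ext
    show LinearMap.rTensor (P.complex.X n) (0 : NM →ₗ[R] residueModule R (R ⧸ I)) = 0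
    exact LinearMap.rTensor_zero _
  let Scc : ShortComplex (HomologicalComplex (ModuleCat.{u} R) (ComplexShape.down ℕ)) :=
    ShortComplex.mk (TT P ιM) (TT P φM) hzero
  have hSE : Scc.ShortExact := by
    apply HomologicalComplex.shortExact_of_degreewise_shortExact
    intro n
    apply ShortComplex.ShortExact.mk'
    · rw [ShortComplex.moduleCat_exact_iff]
      intro x₂ hx₂
      exact (rTensor_exact (P.complex.X n)
        (LinearMap.exact_subtype_mkQ N) (Submodule.mkQ_surjective N) x₂).mp hx₂
    · rw [ModuleCat.mono_iff_injective]
      exact Module.Flat.rTensor_preserves_injective_linearMap ιM.hom (Submodule.injective_subtype N)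
    · rw [ModuleCat.epi_iff_surjective]
      exact LinearMap.rTensor_surjective _ (Submodule.mkQ_surjective N)
  have hfacM : ιM = σM ≫ qM := by
    apply ModuleCat.hom_ext
    apply LinearMap.ext
    intro x
    exact (sigma_spec I J hsum hint x).symm
  let θ := thetaIso P
  have hτ : TT P σM ≫ (θ.hom ≫ P.π) = 0 := by
    ext : 1
    rw [HomologicalComplex.comp_f, HomologicalComplex.comp_f]
    apply ModuleCat.hom_ext
    apply TensorProduct.ext'
    intro x p
    show (P.π.f 0).hom ((λ_ (P.complex.X 0)).hom.hom
      ((LinearMap.rTensor (P.complex.X 0) σM.hom) (x ⊗ₜ p))) = 0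
    rw [LinearMap.rTensor_tmul]
    show (P.π.f 0).hom ((sigma I J hsum hint x) • p) = 0
    rw [map_smul]
    have hm : sigma I J hsum hint x ∈ maximalIdeal R :=
      (hsum ▸ le_sup_right : J ≤ maximalIdeal R) (sigma_mem I J hsum hint x)
    exact smul_residue_eq_zero hm (P.π.f 0 p)
  haveI : IsIso (homologyMap (θ.hom ≫ P.π) i) := by
    rw [homologyMap_comp]
    haveI h1 : IsIso (homologyMap θ.hom i) := by
      exact (inferInstance : IsIso ((homologyFunctor (ModuleCat.{u} R) _ i).map θ.hom))
    haveI h2 : IsIso (homologyMap P.π i) :=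
      (quasiIsoAt_iff_isIso_homologyMap _ _).1 inferInstance
    infer_instance
  have h1 : homologyMap (TT P σM) i ≫ homologyMap (θ.hom ≫ P.π) i = 0 := by
    rw [← homologyMap_comp, hτ, homologyMap_zero]
  have h2 : homologyMap (TT P σM) i = 0 := by
    rw [← cancel_mono (homologyMap (θ.hom ≫ P.π) i), Limits.zero_comp]
    exact h1
  have h0 : homologyMap (TT P ιM) i = 0 := by
    rw [hfacM, TT_comp, homologyMap_comp, h2, Limits.zero_comp]
  exact (hSE.homology_exact₂ i).mono_g h0

end LargeAux

theorem large_of_maximalIdeal_direct_sum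
    (R : Type u) [CommRing R] [IsNoetherianRing R] [IsLocalRing R]
    (I J : Ideal R)
    (hsum : I ⊔ J = maximalIdeal R) (hint : I ⊓ J = ⊥) :
    (∀ i : ℕ, Function.Injective (torAugmentationMap R (R ⧸ I) i)) ∧
      IsLargeQuotient R I := by
  suffices main : ∀ i : ℕ, Function.Injective (torAugmentationMap R (R ⧸ I) i) by
    exact ⟨main, main⟩
  intro i
  obtain ⟨P⟩ := (HasProjectiveResolution.out (Z := ModuleCat.of R (ResidueField R)))
  let φM : ModuleCat.of R (R ⧸ I) ⟶ residueModule R (R ⧸ I) :=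
    ModuleCat.ofHom (Submodule.mkQ (maximalIdeal R • ⊤ : Submodule R (R ⧸ I)))
  have heq : torAugmentationMap R (R ⧸ I) i =
      (P.isoLeftDerivedObj ((MonoidalCategory.tensoringLeft
          (ModuleCat.{u} R)).obj (ModuleCat.of R (R ⧸ I))) i).hom ≫
        (HomologicalComplex.homologyFunctor (ModuleCat.{u} R)
          (ComplexShape.down ℕ) i).map (LargeAux.TT P φM) ≫
        (P.isoLeftDerivedObj ((MonoidalCategory.tensoringLeft
          (ModuleCat.{u} R)).obj (residueModule R (R ⧸ I))) i).inv :=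
    ProjectiveResolution.leftDerived_app_eq
      ((MonoidalCategory.tensoringLeft (ModuleCat.{u} R)).map φM) P i
  rw [heq]
  haveI h1 : Mono (HomologicalComplex.homologyMap (LargeAux.TT P φM) i) :=
    LargeAux.main_mono I J hsum hint P i
  haveI h2 : Mono ((HomologicalComplex.homologyFunctor (ModuleCat.{u} R)
      (ComplexShape.down ℕ) i).map (LargeAux.TT P φM)) := h1
  exact (ModuleCat.mono_iff_injective _).mp (@mono_comp _ _ _ _ _ _ (@IsIso.mono_of_iso _ _ _ _ _ (Iso.isIso_hom _)) _ (@mono_comp _ _ _ _ _ _ h2 _ (@IsIso.mono_of_iso _ _ _ _ _ (Iso.isIso_inv _))))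
end
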